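/- Let q be a prime power and let C_i^{(q²+1,q⁴)} = ω^i⟨ω^{q²+1}⟩ be the (q²+1)-th cyclotomic classes of F_{q⁴} for a primitive element ω. Then the canonical additive character ψ of F_{q⁴} satisfies ψ(C_i^{(q²+1,q⁴)}) = q²−1 if i = (q²+1)/2, and ψ(C_i^{(q²+1,q⁴)}) = −1 otherwise. -/

import Mathlib

open scoped Classical

noncomputable section

/-- The canonical additive character of a finite field `F` of characteristic `p`:
`ψ(x) = exp(2πi · Tr_{F/F_p}(x) / p)`. -/
def canChar (p : ℕ) (F : Type*) [Field F] [Fintype F] [Algebra (ZMod p) F] (x : F) : ℂ :=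
  Complex.exp (2 * Real.pi * Complex.I * ((Algebra.trace (ZMod p) F x).val : ℂ) / p)

/-- The cyclotomic class `C_i^{(N,q)} = ω^i ⟨ω^N⟩`. -/
def cycl {F : Type*} [Field F] [Fintype F] (ω : F) (N i : ℕ) : Finset F :=
  Finset.univ.filter fun x => ∃ k : ℕ, x = ω ^ (i + N * k)

section Aux

variable {p : ℕ} [Fact p.Prime] {F : Type*} [Field F] [Fintype F] [Algebra (ZMod p) F]

lemma canChar_eq (x : F) :
    canChar p F x = Complex.exp (2 * Real.pi * Complex.I / p) ^ (Algebra.trace (ZMod p) F x).val := by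
  rw [canChar, ← Complex.exp_nat_mul]
  ring_nf

lemma trace_pow_p (x : F) :
    Algebra.trace (ZMod p) F (x ^ p) = Algebra.trace (ZMod p) F x := by
  haveI : CharP F p := charP_of_injective_algebraMap (algebraMap (ZMod p) F).injective p
  have hbij : Function.Bijective (frobenius F p) :=
    Finite.injective_iff_bijective.mp (frobenius_inj F p)
  let re : F ≃+* F := RingEquiv.ofBijective (frobenius F p) hbij
  have hcomm : ∀ c : ZMod p, re (algebraMap (ZMod p) F c) = algebraMap (ZMod p) F c := by
    intro c
    show frobenius F p (algebraMap (ZMod p) F c) = algebraMap (ZMod p) F c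
    rw [frobenius_def, ← map_pow, ZMod.pow_card]
  let e : F ≃ₐ[ZMod p] F := AlgEquiv.ofRingEquiv hcomm
  have := Algebra.trace_eq_of_algEquiv e x
  simpa [e, re, frobenius_def] using this

lemma trace_pow_pow (n : ℕ) (x : F) :
    Algebra.trace (ZMod p) F (x ^ p ^ n) = Algebra.trace (ZMod p) F x := by
  induction n with
  | zero => simp
  | succ n ih => rw [pow_succ, pow_mul, trace_pow_p, ih]

lemma char_sum_shift {G : Type*} [AddCommGroup G] [DecidableEq G] (s : Finset G) (χ : G → ℂ)
    (hmul : ∀ x y : G, χ (x + y) = χ x * χ y) (y₀ : G) (hy₀ : χ y₀ ≠ 1)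
    (hclosed : ∀ y ∈ s, y₀ + y ∈ s) : ∑ y ∈ s, χ y = 0 := by
  have himg : s.image (fun y => y₀ + y) = s := by
    apply Finset.eq_of_subset_of_card_le
    · intro z hz
      obtain ⟨y, hy, rfl⟩ := Finset.mem_image.mp hz
      exact hclosed y hy
    · rw [Finset.card_image_of_injective _ (add_right_injective y₀)]
  have h1 : χ y₀ * ∑ y ∈ s, χ y = ∑ y ∈ s, χ y := by
    rw [Finset.mul_sum]
    calc ∑ y ∈ s, χ y₀ * χ y = ∑ y ∈ s, χ (y₀ + y) :=
          Finset.sum_congr rfl fun y _ => (hmul y₀ y).symm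
      _ = ∑ z ∈ s.image (fun y => y₀ + y), χ z := by
          rw [Finset.sum_image (fun a _ b _ h => add_left_cancel h)]
      _ = ∑ y ∈ s, χ y := by rw [himg]
  have h2 := sub_eq_zero.mpr h1
  rw [← sub_one_mul] at h2
  rcases mul_eq_zero.mp h2 with h | h
  · exact absurd (sub_eq_zero.mp h) hy₀
  · exact h

end Aux

theorem stmt_4 (p : ℕ) [Fact p.Prime] (f : ℕ) (hf : 0 < f) (q : ℕ) (hq : q = p ^ f)
    (hodd : Odd q) {F : Type*} [Field F] [Fintype F] [Algebra (ZMod p) F]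
    (hcard : Fintype.card F = q ^ 4)
    (ω : F) (hω : ∀ x : F, x ≠ 0 → ∃ k : ℕ, x = ω ^ k)
    (i : ℕ) (hi : i ≤ q ^ 2) :
    ∑ x ∈ cycl ω (q ^ 2 + 1) i, canChar p F x =
      if i = (q ^ 2 + 1) / 2 then ((q : ℂ) ^ 2 - 1) else -1 := by
  classical
  have hp : p.Prime := Fact.out
  haveI : NeZero p := ⟨hp.ne_zero⟩
  -- basic arithmetic
  have hq2 : 2 ≤ q := by
    rw [hq]; exact le_trans hp.two_le (Nat.le_self_pow hf.ne' p)
  have hp2 : p ≠ 2 := by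
    rintro rfl
    rw [Nat.odd_iff, hq] at hodd
    rw [Nat.pow_mod, Nat.mod_self, Nat.zero_pow hf] at hodd
    simp at hodd
  have hq2sq : 4 ≤ q ^ 2 := by calc 4 = 2^2 := by norm_num
                                    _ ≤ q^2 := Nat.pow_le_pow_left hq2 2
  have h16 : 16 ≤ q ^ 4 := by calc 16 = 2^4 := by norm_num
                                    _ ≤ q^4 := Nat.pow_le_pow_left hq2 4
  have hoddsq : q ^ 2 % 2 = 1 := Nat.odd_iff.mp (hodd.pow)
  have hodd4 : q ^ 4 % 2 = 1 := Nat.odd_iff.mp (hodd.pow)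
  set N := q ^ 2 + 1 with hN
  set M := q ^ 2 - 1 with hM
  set Q := q ^ 4 - 1 with hQdef
  have hq4sq : q ^ 4 = q ^ 2 * q ^ 2 := by ring
  have hMN : N * M = Q := by
    obtain ⟨t, ht⟩ := Nat.exists_eq_add_of_le (show 1 ≤ q ^ 2 by omega)
    have h1 : N = t + 2 := by omega
    have h2 : M = t := by omega
    have h3 : Q = (1 + t) * (1 + t) - 1 := by rw [hQdef, hq4sq, ht]
    rw [h1, h2, h3]
    have : (t + 2) * t + 1 = (1 + t) * (1 + t) := by ring
    omega
  have hMpos : 0 < M := by omega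
  have hNpos : 0 < N := by omega
  -- ω is nonzero
  have hω0 : ω ≠ 0 := by
    intro h0
    obtain ⟨x, hx0, hx1⟩ : ∃ x : F, x ≠ 0 ∧ x ≠ 1 := by
      by_contra hcon
      push_neg at hcon
      have hsub : (Finset.univ : Finset F) ⊆ {0, 1} := by
        intro x _
        rcases eq_or_ne x 0 with rfl | hx
        · simp
        · simp [hcon x hx]
      have hle := Finset.card_le_card hsub
      rw [Finset.card_univ, hcard] at hle
      have : ({0, 1} : Finset F).card ≤ 2 :=
        le_trans (Finset.card_insert_le _ _) (by simp)
      omega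
    obtain ⟨k, hk⟩ := hω x hx0
    rw [h0] at hk
    rcases Nat.eq_zero_or_pos k with rfl | hk0
    · rw [pow_zero] at hk; exact hx1 hk
    · rw [zero_pow hk0.ne'] at hk; exact hx0 hk
  -- order of ω
  set u : Fˣ := Units.mk0 ω hω0 with hu
  have huω : (u : F) = ω := rfl
  have hall : ∀ v : Fˣ, v ∈ Subgroup.zpowers u := by
    intro v
    obtain ⟨k, hk⟩ := hω v.val (Units.ne_zero v)
    refine ⟨(k : ℤ), ?_⟩
    have : ((u ^ (k : ℤ) : Fˣ) : F) = v := by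
      rw [zpow_natCast, Units.val_pow_eq_pow_val, huω, ← hk]
    exact Units.ext this
  have hordu : orderOf u = Q := by
    rw [orderOf_eq_card_of_forall_mem_zpowers hall, Nat.card_eq_fintype_card, Fintype.card_units, hcard]
  have hpow : ∀ a b : ℕ, ω ^ a = ω ^ b ↔ a ≡ b [MOD Q] := by
    intro a b
    rw [← huω, ← Units.val_pow_eq_pow_val, ← Units.val_pow_eq_pow_val, Units.val_inj,
      pow_eq_pow_iff_modEq, hordu]
  have hQ1 : ω ^ Q = 1 := by
    rw [← huω, ← Units.val_pow_eq_pow_val, ← hordu, pow_orderOf_eq_one, Units.val_one]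
  -- membership in cyclotomic classes
  have hmem : ∀ (j : ℕ) (x : F), x ∈ cycl ω N j ↔ ∃ k, x = ω ^ (j + N * k) := by
    intro j x; simp [cycl]
  -- the subfield F_{q^2}
  set Kset : Finset F := insert 0 (cycl ω N 0) with hKset
  have hKchar : ∀ x : F, x ∈ Kset ↔ x ^ q ^ 2 = x := by
    intro x
    constructor
    · intro hx
      rcases Finset.mem_insert.mp hx with rfl | hx
      · rw [zero_pow (by omega : q ^ 2 ≠ 0)]
      · obtain ⟨k, rfl⟩ := (hmem 0 _).mp hx
        rw [zero_add, ← pow_mul]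
        have he : N * k * q ^ 2 = N * k + Q * k := by
          have h2 : N * k * q ^ 2 = N * k + N * M * k := by
            have hqe : q ^ 2 = M + 1 := by omega
            rw [hqe]; ring
          rw [hMN] at h2
          omega
        rw [he, pow_add, pow_mul ω Q k, hQ1, one_pow, mul_one]
    · intro hx
      rcases eq_or_ne x 0 with rfl | hx0
      · exact Finset.mem_insert_self _ _
      · obtain ⟨k, rfl⟩ := hω x hx0
        rw [← pow_mul] at hx
        have hmod := (hpow (k * q ^ 2) k).mp hx
        have hle : k ≤ k * q ^ 2 := Nat.le_mul_of_pos_right k (by omega)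
        have hdvd : Q ∣ k * q ^ 2 - k := (Nat.modEq_iff_dvd' hle).mp hmod.symm
        have heq : k * q ^ 2 - k = k * M := by
          have h3 : k * q ^ 2 = k * M + k := by
            have hqe : q ^ 2 = M + 1 := by omega
            rw [hqe]; ring
          omega
        rw [heq, ← hMN] at hdvd
        obtain ⟨c, hc⟩ := hdvd
        have hkc : k = N * c := by
          have h4 : k * M = N * c * M := by rw [hc]; ring
          exact Nat.eq_of_mul_eq_mul_right hMpos h4
        apply Finset.mem_insert_of_mem
        exact (hmem 0 _).mpr ⟨c, by rw [zero_add, ← hkc]⟩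
  -- cardinality of the classes
  have himage : ∀ j : ℕ, cycl ω N j = (Finset.range M).image (fun k => ω ^ (j + N * k)) := by
    intro j; ext x
    rw [hmem, Finset.mem_image]
    constructor
    · rintro ⟨k, rfl⟩
      refine ⟨k % M, Finset.mem_range.mpr (Nat.mod_lt _ hMpos), ?_⟩
      have hk : M * (k / M) + k % M = k := Nat.div_add_mod k M
      set d := k / M with hd
      set r := k % M with hr
      have he : j + N * k = (j + N * r) + Q * d := by
        have : N * k = N * r + N * M * d := by rw [← hk]; ring
        rw [hMN] at this; omega
      rw [he, pow_add ω (j + N * r) (Q * d), pow_mul ω Q d, hQ1, one_pow, mul_one]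
    · rintro ⟨k, -, rfl⟩; exact ⟨k, rfl⟩
  have hinj : ∀ (j : ℕ), ∀ a ∈ Finset.range M, ∀ b ∈ Finset.range M,
      ω ^ (j + N * a) = ω ^ (j + N * b) → a = b := by
    intro j a ha b hb hab
    rw [Finset.mem_range] at ha hb
    have h1 := (hpow _ _).mp hab
    rw [← hMN] at h1
    have h2 : N * a ≡ N * b [MOD N * M] := Nat.ModEq.add_left_cancel' j h1
    have h3 : a ≡ b [MOD M] := Nat.ModEq.mul_left_cancel' (by omega) h2
    rwa [Nat.ModEq, Nat.mod_eq_of_lt ha, Nat.mod_eq_of_lt hb] at h3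
  have hcardcycl : ∀ j, (cycl ω N j).card = M := by
    intro j
    rw [himage j, Finset.card_image_of_injOn (fun a ha b hb h => hinj j a ha b hb h),
      Finset.card_range]
  have h0notin : (0 : F) ∉ cycl ω N 0 := by
    rw [hmem]; rintro ⟨k, hk⟩; exact (pow_ne_zero _ hω0) hk.symm
  have hKcard : Kset.card = q ^ 2 := by
    rw [hKset, Finset.card_insert_of_notMem h0notin, hcardcycl]; omega
  -- Kset is closed under addition
  haveI : CharP F p := charP_of_injective_algebraMap (algebraMap (ZMod p) F).injective p
  have hqp2 : q ^ 2 = p ^ (f * 2) := by rw [hq, ← pow_mul]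
  have hKadd : ∀ x y : F, x ∈ Kset → y ∈ Kset → x + y ∈ Kset := by
    intro x y hx hy
    rw [hKchar] at hx hy ⊢
    rw [hqp2] at hx hy ⊢
    rw [add_pow_char_pow, hx, hy]
  -- the character
  set ζ : ℂ := Complex.exp (2 * Real.pi * Complex.I / p) with hζdef
  have hζ : IsPrimitiveRoot ζ p := Complex.isPrimitiveRoot_exp p hp.ne_zero
  have hζp : ζ ^ p = 1 := hζ.pow_eq_one
  have hval : ∀ x : F, canChar p F x = ζ ^ (Algebra.trace (ZMod p) F x).val := fun x =>
    canChar_eq x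
  have hone : ∀ x : F, Algebra.trace (ZMod p) F x = 0 → canChar p F x = 1 := by
    intro x hx; rw [hval, hx, ZMod.val_zero, pow_zero]
  have hne1 : ∀ x : F, Algebra.trace (ZMod p) F x ≠ 0 → canChar p F x ≠ 1 := by
    intro x hx
    rw [hval]
    apply hζ.pow_ne_one_of_pos_of_lt
    · exact (fun h => hx ((ZMod.val_eq_zero _).mp h))
    · exact ZMod.val_lt _
  have hmul : ∀ x y : F, canChar p F (x + y) = canChar p F x * canChar p F y := by
    intro x y
    rw [hval, hval, hval, ← pow_add, map_add, ZMod.val_add]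
    exact (pow_eq_pow_mod _ hζp).symm
  -- sums over classes vs sums over Kset
  have hg0 : canChar p F 0 = 1 := hone 0 (map_zero _)
  have hST : ∀ j : ℕ, ∑ y ∈ Kset, canChar p F (ω ^ j * y)
      = (∑ x ∈ cycl ω N j, canChar p F x) + 1 := by
    intro j
    rw [hKset, Finset.sum_insert h0notin, mul_zero, hg0]
    have hs : ∑ y ∈ cycl ω N 0, canChar p F (ω ^ j * y) = ∑ x ∈ cycl ω N j, canChar p F x := by
      rw [himage 0, himage j, Finset.sum_image (hinj 0), Finset.sum_image (hinj j)]
      apply Finset.sum_congr rfl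
      intro k _
      rw [← pow_add]
      congr 2
      omega
    rw [hs]; ring
  -- value of the Kset-sum
  have hT : ∀ j : ℕ, ∑ y ∈ Kset, canChar p F (ω ^ j * y)
      = if (∀ y ∈ Kset, Algebra.trace (ZMod p) F (ω ^ j * y) = 0) then ((q : ℂ) ^ 2) else 0 := by
    intro j
    split_ifs with h
    · rw [Finset.sum_congr rfl (fun y hy => hone _ (h y hy)), Finset.sum_const, hKcard]
      push_cast; ring
    · push_neg at h
      obtain ⟨y₀, hy₀K, hy₀⟩ := h
      refine char_sum_shift Kset (fun y => canChar p F (ω ^ j * y)) ?_ y₀ (hne1 _ hy₀) ?_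
      · intro x y; simp only [mul_add]; exact hmul _ _
      · intro y hy; exact hKadd y₀ y hy₀K hy
  -- trace is Frobenius-invariant
  have htrfrob : ∀ x : F, Algebra.trace (ZMod p) F (x ^ q ^ 2) = Algebra.trace (ZMod p) F x := by
    intro x; rw [hqp2]; exact trace_pow_pow _ _
  -- the special index m
  set m := (q ^ 2 + 1) / 2 with hmdef
  have hm2 : 2 * m = N := by omega
  have hQ2 : 2 * (Q / 2) = Q := by omega
  have hmM : m * M = Q / 2 := by
    have h5 : 2 * (m * M) = 2 * (Q / 2) := by
      rw [hQ2, ← hMN, ← hm2]; ring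
    omega
  have hω2 : ω ^ (Q / 2) = -1 := by
    have h1 : ω ^ (Q / 2) * ω ^ (Q / 2) = 1 := by
      rw [← pow_add, show Q / 2 + Q / 2 = Q from by omega, hQ1]
    rcases mul_self_eq_one_iff.mp h1 with h | h
    · exfalso
      have h2 := (hpow (Q / 2) 0).mp (by rw [pow_zero]; exact h)
      rw [Nat.ModEq, Nat.mod_eq_of_lt (by omega), Nat.zero_mod] at h2
      omega
    · exact h
  have htrivm : ∀ y ∈ Kset, Algebra.trace (ZMod p) F (ω ^ m * y) = 0 := by
    intro y hy
    have hy2 : y ^ q ^ 2 = y := (hKchar y).mp hy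
    have ha : (ω ^ m) ^ q ^ 2 = -ω ^ m := by
      rw [← pow_mul]
      have he : m * q ^ 2 = m + m * M := by
        have hqe : q ^ 2 = M + 1 := by omega
        rw [hqe]; ring
      rw [he, pow_add, hmM, hω2, mul_neg_one]
    have h1 : Algebra.trace (ZMod p) F (ω ^ m * y) = -Algebra.trace (ZMod p) F (ω ^ m * y) := by
      conv_lhs => rw [← htrfrob (ω ^ m * y)]
      rw [mul_pow, ha, hy2, neg_mul, map_neg]
    have h2 : (2 : ZMod p) * Algebra.trace (ZMod p) F (ω ^ m * y) = 0 := by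
      linear_combination h1
    have h2ne : (2 : ZMod p) ≠ 0 := by
      intro hcon
      have : ((2 : ℕ) : ZMod p) = 0 := by exact_mod_cast hcon
      rw [ZMod.natCast_eq_zero_iff] at this
      exact hp2 ((Nat.prime_dvd_prime_iff_eq hp Nat.prime_two).mp this)
    rcases mul_eq_zero.mp h2 with h | h
    · exact absurd h h2ne
    · exact h
  -- the trace is not identically zero
  have hFnontriv : ∃ b : F, Algebra.trace (ZMod p) F b ≠ 0 := by
    have hring : ringChar F = p := ringChar.eq F p
    subst hring
    obtain ⟨b, hb⟩ := FiniteField.trace_to_zmod_nondegenerate F (one_ne_zero (α := F))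
    exact ⟨b, by rwa [one_mul] at hb⟩
  -- global character sum
  have hunivsum : ∑ x : F, canChar p F x = 0 := by
    obtain ⟨b, hb⟩ := hFnontriv
    exact char_sum_shift Finset.univ (canChar p F) hmul b (hne1 b hb) (fun y _ => Finset.mem_univ _)
  -- the classes partition F \ {0}
  have hpart : Finset.univ.erase (0 : F) = (Finset.range N).biUnion (cycl ω N) := by
    ext x
    simp only [Finset.mem_erase, Finset.mem_univ, and_true, Finset.mem_biUnion, Finset.mem_range]
    constructor
    · intro hx0
      obtain ⟨k, rfl⟩ := hω x hx0
      refine ⟨k % N, Nat.mod_lt _ (by omega), (hmem _ _).mpr ⟨k / N, ?_⟩⟩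
      congr 1
      exact (Nat.mod_add_div k N).symm
    · rintro ⟨i', hi', hx⟩
      obtain ⟨k, rfl⟩ := (hmem _ _).mp hx
      exact pow_ne_zero _ hω0
  have hdisj : (↑(Finset.range N) : Set ℕ).PairwiseDisjoint (cycl ω N) := by
    intro i₁ hi₁ i₂ hi₂ hne
    rw [Finset.coe_range, Set.mem_Iio] at hi₁ hi₂
    show Disjoint (cycl ω N i₁) (cycl ω N i₂)
    rw [Finset.disjoint_left]
    intro x hx1 hx2
    obtain ⟨k, rfl⟩ := (hmem _ _).mp hx1
    obtain ⟨l, hl⟩ := (hmem _ _).mp hx2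
    have h1 := (hpow _ _).mp hl
    have h2 : (i₁ + N * k) ≡ (i₂ + N * l) [MOD N] := h1.of_dvd ⟨M, hMN.symm⟩
    rw [Nat.ModEq, Nat.add_mul_mod_self_left, Nat.add_mul_mod_self_left,
      Nat.mod_eq_of_lt hi₁, Nat.mod_eq_of_lt hi₂] at h2
    exact hne h2
  -- sum over all classes
  have hsum_classes : ∑ j ∈ Finset.range N, ∑ x ∈ cycl ω N j, canChar p F x = -1 := by
    have h1 := Finset.add_sum_erase Finset.univ (canChar p F) (Finset.mem_univ (0 : F))
    rw [hunivsum, hg0, hpart, Finset.sum_biUnion hdisj] at h1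
    linear_combination h1
  -- per-class values
  have hSval : ∀ j : ℕ, ∑ x ∈ cycl ω N j, canChar p F x
      = (if (∀ y ∈ Kset, Algebra.trace (ZMod p) F (ω ^ j * y) = 0) then ((q : ℂ) ^ 2) else 0)
        - 1 := by
    intro j
    have := hST j
    rw [hT j] at this
    linear_combination -this
  -- count the trivial classes
  set c : Finset ℕ := (Finset.range N).filter
    (fun j => ∀ y ∈ Kset, Algebra.trace (ZMod p) F (ω ^ j * y) = 0) with hcdef
  have hccount : ∑ j ∈ Finset.range N, ∑ x ∈ cycl ω N j, canChar p F x
      = (c.card : ℂ) * (q : ℂ) ^ 2 - N := by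
    rw [Finset.sum_congr rfl (fun j _ => hSval j), Finset.sum_sub_distrib, Finset.sum_const,
      Finset.card_range, ← Finset.sum_filter, Finset.sum_const]
    push_cast
    ring
    rfl
  have hc1 : c.card = 1 := by
    have h1 : (c.card : ℂ) * (q : ℂ) ^ 2 - N = -1 := by rw [← hccount, hsum_classes]
    have hq2ne : ((q : ℂ)) ^ 2 ≠ 0 := pow_ne_zero _ (Nat.cast_ne_zero.mpr (by omega))
    have h2 : (c.card : ℂ) * (q : ℂ) ^ 2 = 1 * (q : ℂ) ^ 2 := by
      have hNc : (N : ℂ) = (q : ℂ) ^ 2 + 1 := by rw [hN]; push_cast; ring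
      rw [hNc] at h1
      linear_combination h1
    have h3 : (c.card : ℂ) = 1 := mul_right_cancel₀ hq2ne h2
    exact_mod_cast h3
  have hmc : m ∈ c := Finset.mem_filter.mpr ⟨Finset.mem_range.mpr (by omega), htrivm⟩
  obtain ⟨a, hc_eq⟩ := Finset.card_eq_one.mp hc1
  have ham : a = m := by rw [hc_eq, Finset.mem_singleton] at hmc; exact hmc.symm
  -- conclude
  rw [hSval i]
  by_cases him : i = m
  · rw [if_pos (him ▸ htrivm), if_pos him]
  · rw [if_neg him, if_neg, zero_sub]
    intro htriv
    have : i ∈ c := Finset.mem_filter.mpr ⟨Finset.mem_range.mpr (by omega), htriv⟩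
    rw [hc_eq, ham, Finset.mem_singleton] at this
    exact him this
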